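/- Consider the N-dimensional delay difference equation x_i(m+1) = c_i(m)x_i(m-τ) + Σ_{j=1}^N h_{ij}(m, x_m), where each h_{ij} satisfies |h_{ij}(m,α) - h_{ij}(m,β)| ≤ H_{ij}‖α-β‖ with constants H_{ij} ≥ 0, and c_i⁺ := sup_m |c_i(m)| < 1. If 1 - c_i⁺ > Σ_{j=1}^N H_{ij} for every i, then the equation is globally exponentially stable: there exist C > 0 and ζ ∈ (0,1) such that ‖x_m(·,α) - x_m(·,β)‖ ≤ C ζ^m ‖α - β‖ for all initial histories α, β ∈ X^N and all m ≥ 0. -/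

import Mathlib

private lemma zpow_anti_of_le_one {ζ : ℝ} (hζ0 : 0 < ζ) (hζ1 : ζ ≤ 1)
    {m n : ℤ} (hmn : m ≤ n) : ζ ^ n ≤ ζ ^ m := by
  have h1 : 1 ≤ ζ⁻¹ := (one_le_inv₀ hζ0).2 hζ1
  have := zpow_le_zpow_right₀ h1 (neg_le_neg hmn)
  simpa [zpow_neg, inv_zpow, inv_inv] using this

/-- Theorem 4.1 of the paper: the generalized neural network
model `x_i(m+1) = c_i(m) x_i(m-τ) + Σ_j h_{ij}(m, x̄_m)` is globally
exponentially stable when `1 - c_i⁺ > Σ_j H_{ij}` for all `i`. -/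
theorem neural_network_global_exponential_stability
    (N τ : ℕ) (r : ℤ) (hr : r ≤ -(τ : ℤ))
    (c : Fin N → ℕ → ℝ) (cplus : Fin N → ℝ)
    (hcb : ∀ i m, |c i m| ≤ cplus i) (hc1 : ∀ i, cplus i < 1)
    (h : Fin N → Fin N → ℕ → (Fin N → (Finset.Icc r (0 : ℤ)) → ℝ) → ℝ)
    (H : Fin N → Fin N → ℝ) (hH : ∀ i j, 0 ≤ H i j)
    (hLip : ∀ i j (m : ℕ) (α β : Fin N → (Finset.Icc r (0 : ℤ)) → ℝ),
      |h i j m α - h i j m β| ≤ H i j * ‖α - β‖)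
    (hmain : ∀ i, 1 - cplus i > ∑ j, H i j) :
    ∃ C : ℝ, 0 < C ∧ ∃ ζ ∈ Set.Ioo (0 : ℝ) 1,
      ∀ x y : Fin N → ℤ → ℝ,
        (∀ i, ∀ m : ℕ, x i ((m : ℤ) + 1) = c i m * x i ((m : ℤ) - τ) +
          ∑ j, h i j m (fun i' (j' : (Finset.Icc r (0 : ℤ))) =>
            x i' ((m : ℤ) + (j' : ℤ)))) →
        (∀ i, ∀ m : ℕ, y i ((m : ℤ) + 1) = c i m * y i ((m : ℤ) - τ) +
          ∑ j, h i j m (fun i' (j' : (Finset.Icc r (0 : ℤ))) =>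
            y i' ((m : ℤ) + (j' : ℤ)))) →
        ∀ m : ℕ,
          ‖(fun i (j : (Finset.Icc r (0 : ℤ))) => x i ((m : ℤ) + (j : ℤ))) -
              (fun i (j : (Finset.Icc r (0 : ℤ))) => y i ((m : ℤ) + (j : ℤ)))‖ ≤
            C * ζ ^ m *
              ‖(fun i (j : (Finset.Icc r (0 : ℤ))) => x i (j : ℤ)) -
                  (fun i (j : (Finset.Icc r (0 : ℤ))) => y i (j : ℤ))‖ := by
  have hτ0 : (0:ℤ) ≤ (τ:ℤ) := Int.ofNat_nonneg τ
  have hr0 : r ≤ 0 := le_trans hr (by linarith)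
  -- trivial case N = 0
  rcases Nat.eq_zero_or_pos N with hN | hN
  · subst hN
    refine ⟨1, one_pos, 1/2, ⟨by norm_num, by norm_num⟩, ?_⟩
    intro x y _ _ m
    have hz : ∀ f : Fin 0 → (Finset.Icc r (0:ℤ)) → ℝ, ‖f‖ = 0 := by
      intro f
      have : f = 0 := Subsingleton.elim f 0
      rw [this, norm_zero]
    rw [hz, hz]
    positivity
  -- main case
  have hne : (Finset.univ : Finset (Fin N)).Nonempty := ⟨⟨0, hN⟩, Finset.mem_univ _⟩
  set S : Fin N → ℝ := fun i => ∑ j, H i j with hSdef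
  have hc0 : ∀ i, 0 ≤ cplus i := fun i => le_trans (abs_nonneg _) (hcb i 0)
  have hS0 : ∀ i, 0 ≤ S i := fun i => Finset.sum_nonneg fun j _ => hH i j
  set a : ℝ := max (1/2) (Finset.univ.sup' hne (fun i => cplus i + S i)) with hadef
  have ha_half : (1/2:ℝ) ≤ a := le_max_left _ _
  have hap : (0:ℝ) < a := lt_of_lt_of_le (by norm_num) ha_half
  have ha1 : a < 1 := by
    apply max_lt (by norm_num)
    rw [Finset.sup'_lt_iff]
    intro i _
    have := hmain i
    simp only [hSdef]
    linarith
  have hai : ∀ i, cplus i + S i ≤ a :=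
    fun i => le_max_of_le_right (Finset.le_sup' (fun i => cplus i + S i) (Finset.mem_univ i))
  set p : ℕ := (1 - r).toNat with hpdef
  have hpz : (p:ℤ) = 1 - r := Int.toNat_of_nonneg (by linarith)
  set ζ : ℝ := a ^ ((p:ℝ)⁻¹) with hζdef
  have hζ0 : 0 < ζ := Real.rpow_pos_of_pos hap _
  have hppos : 0 < p := by omega
  have hζ1 : ζ < 1 := Real.rpow_lt_one hap.le ha1 (by positivity)
  have hζp : ζ ^ (p:ℤ) = a := by
    rw [zpow_natCast, hζdef, ← Real.rpow_natCast (a ^ _) p, ← Real.rpow_mul hap.le,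
      inv_mul_cancel₀ (by exact_mod_cast hppos.ne'), Real.rpow_one]
  refine ⟨ζ ^ r, zpow_pos hζ0 r, ζ, ⟨hζ0, hζ1⟩, ?_⟩
  intro x y hx hy
  set z : Fin N → ℤ → ℝ := fun i n => x i n - y i n with hzdef
  set M : ℝ := ‖(fun i (j : (Finset.Icc r (0 : ℤ))) => x i (j : ℤ)) -
      (fun i (j : (Finset.Icc r (0 : ℤ))) => y i (j : ℤ))‖ with hMdef
  have hM0 : 0 ≤ M := norm_nonneg _
  -- initial segment bound
  have init : ∀ i (k : ℤ), r ≤ k → k ≤ 0 → |z i k| ≤ M := by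
    intro i k hk1 hk2
    have hmem : k ∈ Finset.Icc r (0:ℤ) := Finset.mem_Icc.2 ⟨hk1, hk2⟩
    calc |z i k|
        = ‖((fun i (j : (Finset.Icc r (0 : ℤ))) => x i (j : ℤ)) -
            (fun i (j : (Finset.Icc r (0 : ℤ))) => y i (j : ℤ))) i ⟨k, hmem⟩‖ := by
          simp [hzdef, Real.norm_eq_abs]
      _ ≤ ‖((fun i (j : (Finset.Icc r (0 : ℤ))) => x i (j : ℤ)) -
            (fun i (j : (Finset.Icc r (0 : ℤ))) => y i (j : ℤ))) i‖ :=
          norm_le_pi_norm _ _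
      _ ≤ M := norm_le_pi_norm _ _
  -- key induction
  have key : ∀ n : ℕ, ∀ i, |z i (r + n)| ≤ M * ζ ^ (r + (n:ℤ)) := by
    intro n
    induction n using Nat.strong_induction_on with
    | _ n ih =>
      intro i
      rcases le_or_gt (r + (n:ℤ)) 0 with hk | hk
      · have h1 : (1:ℝ) ≤ ζ ^ (r + (n:ℤ)) := by
          have := zpow_anti_of_le_one hζ0 hζ1.le hk
          simpa using this
        calc |z i (r + n)| ≤ M := init i _ (by omega) hk
          _ ≤ M * ζ ^ (r + (n:ℤ)) := le_mul_of_one_le_right hM0 h1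
      · -- r + n ≥ 1 : use the recurrence at m = r + n - 1
        set m : ℕ := (r + n - 1).toNat with hmdef
        have hmz : (m:ℤ) = r + n - 1 := Int.toNat_of_nonneg (by omega)
        have hstep : r + (n:ℤ) = (m:ℤ) + 1 := by omega
        -- difference of the nonlinearities
        have hhist : ‖(fun i' (j' : (Finset.Icc r (0 : ℤ))) => x i' ((m : ℤ) + (j' : ℤ))) -
            (fun i' (j' : (Finset.Icc r (0 : ℤ))) => y i' ((m : ℤ) + (j' : ℤ)))‖ ≤
            M * ζ ^ ((m:ℤ) + r) := by
          have hrhs : 0 ≤ M * ζ ^ ((m:ℤ) + r) := by positivity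
          rw [pi_norm_le_iff_of_nonneg hrhs]
          intro i'
          rw [pi_norm_le_iff_of_nonneg hrhs]
          intro j'
          obtain ⟨hj1, hj2⟩ := Finset.mem_Icc.1 j'.2
          set n' : ℕ := ((m:ℤ) + (j':ℤ) - r).toNat with hn'def
          have hn'z : (n':ℤ) = (m:ℤ) + (j':ℤ) - r := Int.toNat_of_nonneg (by omega)
          have hn'lt : n' < n := by omega
          have := ih n' hn'lt i'
          have heq : r + (n':ℤ) = (m:ℤ) + (j':ℤ) := by omega
          rw [heq] at this
          calc ‖((fun i' (j' : (Finset.Icc r (0 : ℤ))) => x i' ((m : ℤ) + (j' : ℤ))) -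
              (fun i' (j' : (Finset.Icc r (0 : ℤ))) => y i' ((m : ℤ) + (j' : ℤ)))) i' j'‖
              = |z i' ((m:ℤ) + (j':ℤ))| := by simp [hzdef, Real.norm_eq_abs]
            _ ≤ M * ζ ^ ((m:ℤ) + (j':ℤ)) := this
            _ ≤ M * ζ ^ ((m:ℤ) + r) := by
                apply mul_le_mul_of_nonneg_left _ hM0
                exact zpow_anti_of_le_one hζ0 hζ1.le (by omega)
        -- delayed term
        have hdel : |z i ((m:ℤ) - (τ:ℤ))| ≤ M * ζ ^ ((m:ℤ) + r) := by
          set n' : ℕ := ((m:ℤ) - (τ:ℤ) - r).toNat with hn'def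
          have hn'z : (n':ℤ) = (m:ℤ) - (τ:ℤ) - r := Int.toNat_of_nonneg (by omega)
          have hn'lt : n' < n := by omega
          have := ih n' hn'lt i
          have heq : r + (n':ℤ) = (m:ℤ) - (τ:ℤ) := by omega
          rw [heq] at this
          calc |z i ((m:ℤ) - (τ:ℤ))| ≤ M * ζ ^ ((m:ℤ) - (τ:ℤ)) := this
            _ ≤ M * ζ ^ ((m:ℤ) + r) := by
                apply mul_le_mul_of_nonneg_left _ hM0
                exact zpow_anti_of_le_one hζ0 hζ1.le (by omega)
        -- the recurrence
        have hrec : z i ((m:ℤ) + 1) = c i m * z i ((m:ℤ) - τ) +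
            ∑ j, (h i j m (fun i' (j' : (Finset.Icc r (0 : ℤ))) => x i' ((m : ℤ) + (j' : ℤ))) -
                  h i j m (fun i' (j' : (Finset.Icc r (0 : ℤ))) => y i' ((m : ℤ) + (j' : ℤ)))) := by
          simp only [hzdef, hx i m, hy i m, Finset.sum_sub_distrib]
          ring
        have habs : |z i ((m:ℤ) + 1)| ≤ cplus i * (M * ζ ^ ((m:ℤ) + r)) +
            S i * (M * ζ ^ ((m:ℤ) + r)) := by
          rw [hrec]
          calc |c i m * z i ((m:ℤ) - τ) + ∑ j, _|
              ≤ |c i m * z i ((m:ℤ) - τ)| + |∑ j, (h i j m (fun i' (j' : (Finset.Icc r (0 : ℤ))) => x i' ((m : ℤ) + (j' : ℤ))) -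
                  h i j m (fun i' (j' : (Finset.Icc r (0 : ℤ))) => y i' ((m : ℤ) + (j' : ℤ))))| :=
                abs_add_le _ _
            _ ≤ cplus i * (M * ζ ^ ((m:ℤ) + r)) + S i * (M * ζ ^ ((m:ℤ) + r)) := by
                apply add_le_add
                · rw [abs_mul]
                  exact mul_le_mul (hcb i m) hdel (abs_nonneg _) (hc0 i)
                · calc |∑ j, _| ≤ ∑ j, |h i j m (fun i' (j' : (Finset.Icc r (0 : ℤ))) => x i' ((m : ℤ) + (j' : ℤ))) -
                      h i j m (fun i' (j' : (Finset.Icc r (0 : ℤ))) => y i' ((m : ℤ) + (j' : ℤ)))| :=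
                      Finset.abs_sum_le_sum_abs _ _
                    _ ≤ ∑ j, H i j * (M * ζ ^ ((m:ℤ) + r)) := by
                        apply Finset.sum_le_sum
                        intro j _
                        exact le_trans (hLip i j m _ _)
                          (mul_le_mul_of_nonneg_left hhist (hH i j))
                    _ = S i * (M * ζ ^ ((m:ℤ) + r)) := by
                        rw [hSdef, ← Finset.sum_mul]
        have hfinal : cplus i * (M * ζ ^ ((m:ℤ) + r)) + S i * (M * ζ ^ ((m:ℤ) + r)) ≤
            M * ζ ^ ((m:ℤ) + 1) := by
          have h1 : cplus i * (M * ζ ^ ((m:ℤ) + r)) + S i * (M * ζ ^ ((m:ℤ) + r)) =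
              (cplus i + S i) * (M * ζ ^ ((m:ℤ) + r)) := by ring
          have h2 : (cplus i + S i) * (M * ζ ^ ((m:ℤ) + r)) ≤ a * (M * ζ ^ ((m:ℤ) + r)) := by
            apply mul_le_mul_of_nonneg_right (hai i) (by positivity)
          have h3 : a * (M * ζ ^ ((m:ℤ) + r)) = M * ζ ^ ((m:ℤ) + 1) :=
            calc a * (M * ζ ^ ((m:ℤ) + r))
                = M * (ζ ^ ((p:ℤ)) * ζ ^ ((m:ℤ) + r)) := by rw [hζp]; ring
              _ = M * ζ ^ ((p:ℤ) + ((m:ℤ) + r)) := by rw [zpow_add₀ hζ0.ne' (p:ℤ) ((m:ℤ) + r)]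
              _ = M * ζ ^ ((m:ℤ) + 1) := by
                  rw [show (p:ℤ) + ((m:ℤ) + r) = (m:ℤ) + 1 by omega]
          linarith
        rw [hstep]
        exact habs.trans hfinal
  -- conclusion
  intro m
  have hrhs0 : 0 ≤ ζ ^ r * ζ ^ m * M := by positivity
  rw [pi_norm_le_iff_of_nonneg hrhs0]
  intro i
  rw [pi_norm_le_iff_of_nonneg hrhs0]
  intro j
  obtain ⟨hj1, hj2⟩ := Finset.mem_Icc.1 j.2
  set n : ℕ := ((m:ℤ) + (j:ℤ) - r).toNat with hndef
  have hnz : (n:ℤ) = (m:ℤ) + (j:ℤ) - r := Int.toNat_of_nonneg (by omega)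
  have := key n i
  have heq : r + (n:ℤ) = (m:ℤ) + (j:ℤ) := by omega
  rw [heq] at this
  calc ‖((fun i (j : (Finset.Icc r (0 : ℤ))) => x i ((m : ℤ) + (j : ℤ))) -
        (fun i (j : (Finset.Icc r (0 : ℤ))) => y i ((m : ℤ) + (j : ℤ)))) i j‖
      = |z i ((m:ℤ) + (j:ℤ))| := by simp [hzdef, Real.norm_eq_abs]
    _ ≤ M * ζ ^ ((m:ℤ) + (j:ℤ)) := this
    _ ≤ M * ζ ^ ((m:ℤ) + r) := by
        apply mul_le_mul_of_nonneg_left _ hM0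
        exact zpow_anti_of_le_one hζ0 hζ1.le (by omega)
    _ = ζ ^ r * ζ ^ m * M := by
        rw [zpow_add₀ hζ0.ne', zpow_natCast]
        ring
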